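/- Let 𝒪 be an algebra of observables on a nonempty set Ω and P an observable probability. Let Xₙ ∈ 𝒪 with X₁(ω) ≥ α for all ω, Xₙ ≤ Xₙ₊₁ pointwise, and Xₙ → X pointwise with X ∈ 𝒪 integrable. Then each Xₙ is integrable and ∫ Xₙ dP increases to ∫ X dP. -/

import Mathlib

open Filter MeasureTheory Topology

variable {Ω : Type*}

/-- A family `𝒪` of real functions on `Ω` is an algebra of observables: for every `n ≥ 1`,
all `X₁, …, Xₙ ∈ 𝒪` and every `φ` continuous on the image of `(X₁, …, Xₙ)`,
the composite `ω ↦ φ (X₁ ω, …, Xₙ ω)` belongs to `𝒪`. -/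
def IsObsAlg (o : Set (Ω → ℝ)) : Prop :=
  ∀ n : ℕ, 0 < n → ∀ X : Fin n → Ω → ℝ, (∀ i, X i ∈ o) →
    ∀ φ : (Fin n → ℝ) → ℝ,
      ContinuousOn φ (Set.range fun ω => fun i => X i ω) →
      (fun ω => φ fun i => X i ω) ∈ o

/-- `F ⊆ Ω` is a zero set if `F = X⁻¹({0})` for some `X ∈ 𝒪`. -/
def IsZeroSet (o : Set (Ω → ℝ)) (F : Set Ω) : Prop :=
  ∃ X ∈ o, F = X ⁻¹' {0}

/-- A co-zero set is the complement of a zero set. -/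
def IsCozeroSet (o : Set (Ω → ℝ)) (U : Set Ω) : Prop :=
  IsZeroSet o Uᶜ

/-- The observable sets are the zero sets together with the co-zero sets. -/
def IsObsSet (o : Set (Ω → ℝ)) (A : Set Ω) : Prop :=
  IsZeroSet o A ∨ IsCozeroSet o A

/-- An observable probability: additive on disjoint observable sets with observable union,
nonnegative on observable sets, normalized, with monotone convergence along increasing
sequences of co-zero sets whose union is a co-zero set. -/
def IsObsProb (o : Set (Ω → ℝ)) (P : Set Ω → ℝ) : Prop :=
  (∀ A B : Set Ω, IsObsSet o A → IsObsSet o B → Disjoint A B →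
    IsObsSet o (A ∪ B) → P (A ∪ B) = P A + P B) ∧
  (∀ A : Set Ω, IsObsSet o A → 0 ≤ P A) ∧
  (P Set.univ = 1) ∧
  (∀ (U : ℕ → Set Ω) (V : Set Ω), (∀ i, IsCozeroSet o (U i)) → Monotone U →
    IsCozeroSet o V → (⋃ i, U i) = V →
    Tendsto (fun i => P (U i)) atTop (𝓝 (P V)))

/-- `μ` is the distribution of `X` under `P`: a Borel probability measure on `ℝ` with
`μ U = P (X ⁻¹' U)` for every open `U ⊆ ℝ`. -/
def IsDistribution (o : Set (Ω → ℝ)) (P : Set Ω → ℝ) (X : Ω → ℝ)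
    (μ : Measure ℝ) : Prop :=
  IsProbabilityMeasure μ ∧
  ∀ U : Set ℝ, IsOpen U → μ U = ENNReal.ofReal (P (X ⁻¹' U))

/-- Membership in `𝒪^∞`: a bounded member of `𝒪`. -/
def MemBdd (o : Set (Ω → ℝ)) (X : Ω → ℝ) : Prop :=
  X ∈ o ∧ ∃ M : ℝ, ∀ ω, |X ω| ≤ M

/-- The closed algebra `𝒜_X` generated by `X`: all `φ ∘ X` with `φ : ℝ → ℝ` continuous
(equivalent, by Tietze extension, to continuous functions on the closure of the image). -/
def ClosedAlg (X : Ω → ℝ) : Set (Ω → ℝ) :=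
  {Y | ∃ φ : ℝ → ℝ, Continuous φ ∧ Y = φ ∘ X}

/-- Positivity of a functional on `𝒪^∞`. -/
def PositiveFunc (o : Set (Ω → ℝ)) (E : (Ω → ℝ) → ℝ) : Prop :=
  ∀ X, MemBdd o X → (∀ ω, 0 ≤ X ω) → 0 ≤ E X

/-- Quasi-linearity: `E` is linear on each `𝒜_X`, `X ∈ 𝒪^∞`. -/
def QuasiLinear (o : Set (Ω → ℝ)) (E : (Ω → ℝ) → ℝ) : Prop :=
  ∀ X, MemBdd o X → ∀ Y ∈ ClosedAlg X, ∀ Z ∈ ClosedAlg X, ∀ a b : ℝ,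
    E (fun ω => a * Y ω + b * Z ω) = a * E Y + b * E Z

/-- `X ⪯ U` : there is a zero set `F` with `X ≤ 1_F` pointwise and `F ⊆ U`. -/
def PrecU (o : Set (Ω → ℝ)) (X : Ω → ℝ) (U : Set Ω) : Prop :=
  ∃ F : Set Ω, IsZeroSet o F ∧ (∀ ω, X ω ≤ F.indicator (fun _ => (1:ℝ)) ω) ∧ F ⊆ U

/-- An observable expectation: quasi-linear, positive, normalized, with monotone
convergence along increasing sequences in `𝒪^∞` converging pointwise in `𝒪^∞`. -/
def IsObsExp (o : Set (Ω → ℝ)) (E : (Ω → ℝ) → ℝ) : Prop :=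
  QuasiLinear o E ∧ PositiveFunc o E ∧ E (fun _ => 1) = 1 ∧
  (∀ (X : ℕ → Ω → ℝ) (Y : Ω → ℝ), (∀ n, MemBdd o (X n)) → MemBdd o Y →
    (∀ n ω, X n ω ≤ X (n+1) ω) →
    (∀ ω, Tendsto (fun n => X n ω) atTop (𝓝 (Y ω))) →
    Tendsto (fun n => E (X n)) atTop (𝓝 (E Y)))

/-- A quasi-additive probability: axioms (I)-(III) of an observable probability
together with inner regularity (IV'): `P U = sup {P F : F zero set, F ⊆ U}`. -/
def IsQuasiAddProb (o : Set (Ω → ℝ)) (P : Set Ω → ℝ) : Prop :=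
  (∀ A B : Set Ω, IsObsSet o A → IsObsSet o B → Disjoint A B →
    IsObsSet o (A ∪ B) → P (A ∪ B) = P A + P B) ∧
  (∀ A : Set Ω, IsObsSet o A → 0 ≤ P A) ∧
  (P Set.univ = 1) ∧
  (∀ U : Set Ω, IsCozeroSet o U →
    P U = sSup {r | ∃ F : Set Ω, IsZeroSet o F ∧ F ⊆ U ∧ r = P F})

lemma comp1_mem {o : Set (Ω → ℝ)} (hO : IsObsAlg o) {f : Ω → ℝ} (hf : f ∈ o)
    {φ : ℝ → ℝ} (hφ : Continuous φ) : (fun ω => φ (f ω)) ∈ o := by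
  have := hO 1 one_pos (fun _ => f) (fun _ => hf) (fun v => φ (v 0))
    ((hφ.comp (continuous_apply 0)).continuousOn)
  simpa using this

lemma comp2_mem {o : Set (Ω → ℝ)} (hO : IsObsAlg o) {f g : Ω → ℝ} (hf : f ∈ o) (hg : g ∈ o)
    {φ : ℝ → ℝ → ℝ} (hφ : Continuous fun p : ℝ × ℝ => φ p.1 p.2) :
    (fun ω => φ (f ω) (g ω)) ∈ o := by
  have := hO 2 (by norm_num) ![f, g] (by intro i; fin_cases i <;> simpa)
    (fun v => φ (v 0) (v 1))
    (Continuous.continuousOn (by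
      have : (fun v : Fin 2 → ℝ => φ (v 0) (v 1)) =
          (fun p : ℝ × ℝ => φ p.1 p.2) ∘ (fun v => (v 0, v 1)) := rfl
      rw [this]
      exact hφ.comp ((continuous_apply (0 : Fin 2)).prodMk (continuous_apply 1))))
  simpa using this

lemma cozero_Ioi {o : Set (Ω → ℝ)} (hO : IsObsAlg o) {f : Ω → ℝ} (hf : f ∈ o) (c : ℝ) :
    IsCozeroSet o (f ⁻¹' Set.Ioi c) := by
  refine ⟨fun ω => max (f ω - c) 0, comp1_mem hO hf (φ := fun x => max (x - c) 0) (by fun_prop), ?_⟩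
  ext ω
  simp [max_eq_right_iff, sub_nonpos, not_lt]

lemma zero_Ici {o : Set (Ω → ℝ)} (hO : IsObsAlg o) {f : Ω → ℝ} (hf : f ∈ o) (c : ℝ) :
    IsZeroSet o (f ⁻¹' Set.Ici c) := by
  refine ⟨fun ω => max (c - f ω) 0, comp1_mem hO hf (φ := fun x => max (c - x) 0) (by fun_prop), ?_⟩
  ext ω
  simp [max_eq_right_iff, sub_nonpos]

lemma zero_singleton {o : Set (Ω → ℝ)} (hO : IsObsAlg o) {f : Ω → ℝ} (hf : f ∈ o) (c : ℝ) :
    IsZeroSet o (f ⁻¹' {c}) := by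
  refine ⟨fun ω => f ω - c, comp1_mem hO hf (φ := fun x => x - c) (by fun_prop), ?_⟩
  ext ω
  simp [sub_eq_zero]

lemma P_empty {o : Set (Ω → ℝ)} (hO : IsObsAlg o) {P : Set Ω → ℝ} (hP : IsObsProb o P)
    (hw : ∃ f, f ∈ o) : P ∅ = 0 := by
  obtain ⟨f, hf⟩ := hw
  have h1 : (fun _ : Ω => (1:ℝ)) ∈ o := comp1_mem hO hf continuous_const
  have hz : IsObsSet o (∅ : Set Ω) := Or.inl ⟨_, h1, by ext ω; simp⟩
  have key := hP.1 ∅ ∅ hz hz (by simp) (by simpa using hz)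
  simp only [Set.union_empty] at key
  linarith

lemma P_zero_le_cozero {o : Set (Ω → ℝ)} (hO : IsObsAlg o) {P : Set Ω → ℝ}
    (hP : IsObsProb o P) {F U : Set Ω} (hF : IsZeroSet o F) (hU : IsCozeroSet o U)
    (hsub : F ⊆ U) : P F ≤ P U := by
  obtain ⟨z, hz, hFz⟩ := hF
  obtain ⟨u, hu, hUu⟩ := hU
  have hB : IsCozeroSet o (U ∩ Fᶜ) := by
    refine ⟨fun ω => u ω * z ω, comp2_mem hO hu hz (by fun_prop), ?_⟩
    ext ω
    have h1 : ω ∈ Uᶜ ↔ u ω = 0 := by rw [hUu]; rfl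
    have h2 : ω ∈ F ↔ z ω = 0 := by rw [hFz]; rfl
    simp only [Set.compl_inter, compl_compl, Set.mem_union, Set.mem_preimage,
      Set.mem_singleton_iff, mul_eq_zero, h1, h2]
  have hunion : F ∪ (U ∩ Fᶜ) = U := by
    ext ω
    constructor
    · rintro (h | h)
      · exact hsub h
      · exact h.1
    · intro h
      by_cases hωF : ω ∈ F
      · exact Or.inl hωF
      · exact Or.inr ⟨h, hωF⟩
  have key := hP.1 F (U ∩ Fᶜ) (Or.inl ⟨z, hz, hFz⟩) (Or.inr hB)
    (Set.disjoint_left.2 fun ω h1 h2 => h2.2 h1)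
    (by rw [hunion]; exact Or.inr ⟨u, hu, hUu⟩)
  rw [hunion] at key
  have pos := hP.2.1 (U ∩ Fᶜ) (Or.inr hB)
  linarith

lemma P_Ioi_le_Ici {o : Set (Ω → ℝ)} (hO : IsObsAlg o) {P : Set Ω → ℝ}
    (hP : IsObsProb o P) {w : Ω → ℝ} (hw : w ∈ o) (c : ℝ) :
    P (w ⁻¹' Set.Ioi c) ≤ P (w ⁻¹' Set.Ici c) := by
  have hunion : w ⁻¹' Set.Ioi c ∪ w ⁻¹' {c} = w ⁻¹' Set.Ici c := by
    rw [← Set.preimage_union, Set.Ioi_union_left]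
  have key := hP.1 (w ⁻¹' Set.Ioi c) (w ⁻¹' {c})
    (Or.inr (cozero_Ioi hO hw c)) (Or.inl (zero_singleton hO hw c))
    (Set.disjoint_left.2 fun ω h1 h2 => absurd h2 (ne_of_gt h1))
    (by rw [hunion]; exact Or.inl (zero_Ici hO hw c))
  rw [hunion] at key
  have pos := hP.2.1 (w ⁻¹' {c}) (Or.inl (zero_singleton hO hw c))
  linarith

lemma P_mono_cozero {o : Set (Ω → ℝ)} (hO : IsObsAlg o) {P : Set Ω → ℝ}
    (hP : IsObsProb o P) {W V : Set Ω} (hW : IsCozeroSet o W) (hV : IsCozeroSet o V)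
    (hsub : W ⊆ V) : P W ≤ P V := by
  obtain ⟨w0, hw0, hWw⟩ := hW
  set w : Ω → ℝ := fun ω => |w0 ω| with hw_def
  have hw : w ∈ o := comp1_mem hO hw0 continuous_abs
  have hWmem : ∀ ω, ω ∈ W ↔ 0 < w ω := by
    intro ω
    have : ω ∈ Wᶜ ↔ w0 ω = 0 := by rw [hWw]; rfl
    simp only [Set.mem_compl_iff] at this
    rw [← not_iff_not, this, hw_def, not_lt]
    simp [abs_nonpos_iff]
  set U : ℕ → Set Ω := fun m => w ⁻¹' Set.Ioi (1 / (m + 1)) with hU_def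
  have hUco : ∀ m, IsCozeroSet o (U m) := fun m => cozero_Ioi hO hw _
  have hUmono : Monotone U := by
    intro m m' hmm ω hω
    simp only [hU_def, Set.mem_preimage, Set.mem_Ioi] at hω ⊢
    have : (1 : ℝ) / (m' + 1) ≤ 1 / (m + 1) := by
      apply one_div_le_one_div_of_le
      · positivity
      · exact_mod_cast add_le_add_left (Nat.cast_le.2 hmm) 1
    linarith
  have hWco : IsCozeroSet o W := ⟨w0, hw0, hWw⟩
  have hunion : (⋃ m, U m) = W := by
    ext ω
    simp only [Set.mem_iUnion, hU_def, Set.mem_preimage, Set.mem_Ioi, hWmem ω]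
    constructor
    · rintro ⟨m, hm⟩
      have : (0:ℝ) < 1 / (m + 1) := by positivity
      linarith
    · intro h
      obtain ⟨n, hn⟩ := exists_nat_one_div_lt h
      exact ⟨n, by exact_mod_cast hn⟩
  have hconv := hP.2.2.2 U W hUco hUmono hWco hunion
  refine le_of_tendsto hconv (Eventually.of_forall fun m => ?_)
  calc P (U m) ≤ P (w ⁻¹' Set.Ici (1 / (m + 1))) := P_Ioi_le_Ici hO hP hw _
    _ ≤ P V := by
        apply P_zero_le_cozero hO hP (zero_Ici hO hw _) hV
        intro ω hω
        simp only [Set.mem_preimage, Set.mem_Ici] at hω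
        apply hsub
        rw [hWmem ω]
        have : (0:ℝ) < 1 / (m + 1) := by positivity
        linarith

lemma ae_ge_of_Iio_zero {ν : Measure ℝ} {α : ℝ} (h : ν (Set.Iio α) = 0) :
    ∀ᵐ t ∂ν, α ≤ t := by
  rw [ae_iff]
  have : {t : ℝ | ¬ α ≤ t} = Set.Iio α := by ext t; simp [not_le]
  rw [this]; exact h

lemma lintegral_sub_eq_tail (ν : Measure ℝ) {α : ℝ} (h : ν (Set.Iio α) = 0) :
    ∫⁻ t, ENNReal.ofReal (t - α) ∂ν = ∫⁻ s in Set.Ioi 0, ν (Set.Ioi (α + s)) := by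
  have hnn : 0 ≤ᵐ[ν] fun t => t - α := by
    filter_upwards [ae_ge_of_Iio_zero h] with t ht
    simpa [sub_nonneg] using ht
  rw [lintegral_eq_lintegral_meas_lt ν hnn (by fun_prop)]
  apply lintegral_congr_ae
  apply Eventually.of_forall
  intro s
  have hset : {a : ℝ | s < a - α} = Set.Ioi (α + s) := by
    ext t
    simp only [Set.mem_setOf_eq, Set.mem_Ioi]
    constructor <;> intro <;> linarith
  show ν {a : ℝ | s < a - α} = ν (Set.Ioi (α + s))
  rw [hset]

lemma tail_antitone_measurable (ν : Measure ℝ) (α : ℝ) :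
    Measurable fun s : ℝ => ν (Set.Ioi (α + s)) := by
  apply Antitone.measurable
  intro s s' hss
  exact measure_mono (Set.Ioi_subset_Ioi (by linarith))

lemma integral_eq_add_lintegral {ν : Measure ℝ} [IsProbabilityMeasure ν] {α : ℝ}
    (h : ν (Set.Iio α) = 0) (hint : Integrable id ν) :
    ∫ t, t ∂ν = α + (∫⁻ t, ENNReal.ofReal (t - α) ∂ν).toReal := by
  have hnn : 0 ≤ᵐ[ν] fun t => t - α := by
    filter_upwards [ae_ge_of_Iio_zero h] with t ht
    simpa [sub_nonneg] using ht
  have hi : Integrable (fun t => t - α) ν := hint.sub (integrable_const α)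
  have h1 : ∫ t, (t - α) ∂ν = (∫⁻ t, ENNReal.ofReal (t - α) ∂ν).toReal := by
    rw [integral_eq_lintegral_of_nonneg_ae hnn hi.1]
  have h2 : ∫ t, (t - α) ∂ν = (∫ t, t ∂ν) - α := by
    have h3 := integral_sub hint (integrable_const α)
    simp only [id, integral_const, measure_univ, ENNReal.toReal_one, probReal_univ, one_smul] at h3
    exact h3
  rw [h2] at h1
  linarith

lemma integrable_of_tail {ν : Measure ℝ} [IsProbabilityMeasure ν] {α : ℝ}
    (h : ν (Set.Iio α) = 0) (hfin : ∫⁻ t, ENNReal.ofReal (t - α) ∂ν ≠ ⊤) :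
    Integrable id ν := by
  refine ⟨measurable_id.aestronglyMeasurable, ?_⟩
  show (∫⁻ t, (‖t‖₊ : ENNReal) ∂ν) < ⊤
  have hbound : ∀ᵐ t ∂ν, (‖t‖₊ : ENNReal) ≤ ENNReal.ofReal (t - α) + ENNReal.ofReal |α| := by
    filter_upwards [ae_ge_of_Iio_zero h] with t ht
    have h1 : |t| ≤ (t - α) + |α| := by
      rcases abs_cases t with ⟨h2, _⟩ | ⟨h2, _⟩ <;> rcases abs_cases α with ⟨h3, _⟩ | ⟨h3, _⟩ <;> linarith
    calc (‖t‖₊ : ENNReal) = ENNReal.ofReal |t| := Real.enorm_eq_ofReal_abs t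
      _ ≤ ENNReal.ofReal ((t - α) + |α|) := ENNReal.ofReal_le_ofReal h1
      _ ≤ ENNReal.ofReal (t - α) + ENNReal.ofReal |α| := ENNReal.ofReal_add_le
  calc ∫⁻ t, (‖t‖₊ : ENNReal) ∂ν ≤ ∫⁻ t, (ENNReal.ofReal (t - α) + ENNReal.ofReal |α|) ∂ν :=
        lintegral_mono_ae hbound
    _ = (∫⁻ t, ENNReal.ofReal (t - α) ∂ν) + ENNReal.ofReal |α| := by
        rw [lintegral_add_right _ measurable_const, lintegral_const, measure_univ, mul_one]
    _ < ⊤ := by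
        rw [ENNReal.add_lt_top]
        exact ⟨hfin.lt_top, ENNReal.ofReal_lt_top⟩

/-- monotone convergence of the integral for observables bounded below. -/
theorem integral_monotone_convergence {Ω : Type*} [Nonempty Ω]
    (o : Set (Ω → ℝ)) (hO : IsObsAlg o) (P : Set Ω → ℝ) (hP : IsObsProb o P)
    (Xs : ℕ → Ω → ℝ) (X : Ω → ℝ) (hXs : ∀ n, Xs n ∈ o) (hX : X ∈ o)
    (α : ℝ) (hα : ∀ ω, α ≤ Xs 0 ω)
    (hmono : ∀ n ω, Xs n ω ≤ Xs (n + 1) ω)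
    (hlim : ∀ ω, Tendsto (fun n => Xs n ω) atTop (𝓝 (X ω)))
    (μs : ℕ → Measure ℝ) (μ : Measure ℝ)
    (hμs : ∀ n, IsDistribution o P (Xs n) (μs n)) (hμ : IsDistribution o P X μ)
    (hint : Integrable id μ) :
    (∀ n, Integrable id (μs n)) ∧
    Monotone (fun n => ∫ t, t ∂(μs n)) ∧
    Tendsto (fun n => ∫ t, t ∂(μs n)) atTop (𝓝 (∫ t, t ∂μ)) := by
  have hwit : ∃ f, f ∈ o := ⟨X, hX⟩
  have hPempty : P ∅ = 0 := P_empty hO hP hwit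
  have hXsmono : ∀ m n, m ≤ n → ∀ ω, Xs m ω ≤ Xs n ω := fun m n hmn ω =>
    monotone_nat_of_le_succ (fun k => hmono k ω) hmn
  have hle_lim : ∀ n ω, Xs n ω ≤ X ω := fun n ω =>
    ge_of_tendsto (hlim ω) (eventually_atTop.2 ⟨n, fun m hm => hXsmono n m hm ω⟩)
  have hαn : ∀ n ω, α ≤ Xs n ω := fun n ω => (hα ω).trans (hXsmono 0 n (Nat.zero_le n) ω)
  have hαX : ∀ ω, α ≤ X ω := fun ω => (hα ω).trans (hle_lim 0 ω)
  have hprob : ∀ n, IsProbabilityMeasure (μs n) := fun n => (hμs n).1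
  have hprobμ : IsProbabilityMeasure μ := hμ.1
  have hsupp : ∀ n, μs n (Set.Iio α) = 0 := by
    intro n
    rw [(hμs n).2 _ isOpen_Iio]
    have he : Xs n ⁻¹' Set.Iio α = ∅ := by
      ext ω
      simp only [Set.mem_preimage, Set.mem_Iio, Set.mem_empty_iff_false, iff_false, not_lt]
      exact hαn n ω
    rw [he, hPempty, ENNReal.ofReal_zero]
  have hsuppμ : μ (Set.Iio α) = 0 := by
    rw [hμ.2 _ isOpen_Iio]
    have he : X ⁻¹' Set.Iio α = ∅ := by
      ext ω
      simp only [Set.mem_preimage, Set.mem_Iio, Set.mem_empty_iff_false, iff_false, not_lt]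
      exact hαX ω
    rw [he, hPempty, ENNReal.ofReal_zero]
  have htail : ∀ n (c : ℝ), μs n (Set.Ioi c) = ENNReal.ofReal (P (Xs n ⁻¹' Set.Ioi c)) :=
    fun n c => (hμs n).2 _ isOpen_Ioi
  have htailμ : ∀ c : ℝ, μ (Set.Ioi c) = ENNReal.ofReal (P (X ⁻¹' Set.Ioi c)) :=
    fun c => hμ.2 _ isOpen_Ioi
  have hPmono : ∀ (c : ℝ) (m n : ℕ), m ≤ n →
      P (Xs m ⁻¹' Set.Ioi c) ≤ P (Xs n ⁻¹' Set.Ioi c) := fun c m n hmn =>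
    P_mono_cozero hO hP (cozero_Ioi hO (hXs m) c) (cozero_Ioi hO (hXs n) c)
      (fun ω hω => lt_of_lt_of_le hω (hXsmono m n hmn ω))
  have hPle : ∀ (c : ℝ) (n : ℕ), P (Xs n ⁻¹' Set.Ioi c) ≤ P (X ⁻¹' Set.Ioi c) := fun c n =>
    P_mono_cozero hO hP (cozero_Ioi hO (hXs n) c) (cozero_Ioi hO hX c)
      (fun ω hω => lt_of_lt_of_le hω (hle_lim n ω))
  have hPtend : ∀ c : ℝ,
      Tendsto (fun n => P (Xs n ⁻¹' Set.Ioi c)) atTop (𝓝 (P (X ⁻¹' Set.Ioi c))) := by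
    intro c
    apply hP.2.2.2 (fun n => Xs n ⁻¹' Set.Ioi c) (X ⁻¹' Set.Ioi c)
      (fun n => cozero_Ioi hO (hXs n) c)
      (fun m n hmn ω hω => lt_of_lt_of_le hω (hXsmono m n hmn ω))
      (cozero_Ioi hO hX c)
    ext ω
    simp only [Set.mem_iUnion, Set.mem_preimage, Set.mem_Ioi]
    constructor
    · rintro ⟨n, hn⟩
      exact lt_of_lt_of_le hn (hle_lim n ω)
    · intro h
      exact ((hlim ω).eventually (lt_mem_nhds h)).exists
  set L : ℕ → ENNReal := fun n => ∫⁻ t, ENNReal.ofReal (t - α) ∂(μs n) with hL_def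
  set Lμ : ENNReal := ∫⁻ t, ENNReal.ofReal (t - α) ∂μ with hLμ_def
  have hLn : ∀ n, L n = ∫⁻ s in Set.Ioi 0, μs n (Set.Ioi (α + s)) := fun n =>
    lintegral_sub_eq_tail (μs n) (hsupp n)
  have hLμ : Lμ = ∫⁻ s in Set.Ioi 0, μ (Set.Ioi (α + s)) :=
    lintegral_sub_eq_tail μ hsuppμ
  have hLμfin : Lμ ≠ ⊤ := by
    have hi : Integrable (fun t : ℝ => t - α) μ := hint.sub (integrable_const α)
    have hfi := hi.2
    rw [HasFiniteIntegral] at hfi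
    refine ne_top_of_le_ne_top hfi.ne ?_
    apply lintegral_mono
    intro t
    show ENNReal.ofReal (t - α) ≤ (‖t - α‖₊ : ENNReal)
    rw [← enorm_eq_nnnorm, Real.enorm_eq_ofReal_abs]
    exact ENNReal.ofReal_le_ofReal (le_abs_self _)
  have hLle : ∀ n, L n ≤ Lμ := by
    intro n
    rw [hLn n, hLμ]
    apply lintegral_mono
    intro s
    show μs n (Set.Ioi (α + s)) ≤ μ (Set.Ioi (α + s))
    rw [htail, htailμ]
    exact ENNReal.ofReal_le_ofReal (hPle _ n)
  have hLmono : Monotone L := by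
    intro m n hmn
    rw [hLn m, hLn n]
    apply lintegral_mono
    intro s
    show μs m (Set.Ioi (α + s)) ≤ μs n (Set.Ioi (α + s))
    rw [htail, htail]
    exact ENNReal.ofReal_le_ofReal (hPmono _ m n hmn)
  have hLfin : ∀ n, L n ≠ ⊤ := fun n => ne_top_of_le_ne_top hLμfin (hLle n)
  have hint_n : ∀ n, Integrable id (μs n) := fun n =>
    haveI := hprob n
    integrable_of_tail (hsupp n) (hLfin n)
  have hIn : ∀ n, ∫ t, t ∂(μs n) = α + (L n).toReal := fun n =>
    haveI := hprob n
    integral_eq_add_lintegral (hsupp n) (hint_n n)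
  have hIμ : ∫ t, t ∂μ = α + Lμ.toReal :=
    haveI := hprobμ
    integral_eq_add_lintegral hsuppμ hint
  refine ⟨hint_n, ?_, ?_⟩
  · intro m n hmn
    simp only [hIn]
    exact add_le_add_right (ENNReal.toReal_mono (hLfin n) (hLmono hmn)) α
  · have hLtend : Tendsto L atTop (𝓝 Lμ) := by
      have hfun : L = fun n => ∫⁻ s in Set.Ioi 0, μs n (Set.Ioi (α + s)) := funext hLn
      rw [hfun, hLμ]
      apply lintegral_tendsto_of_tendsto_of_monotone
      · exact fun n => (tail_antitone_measurable (μs n) α).aemeasurable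
      · apply Eventually.of_forall
        intro s m n hmn
        show μs m (Set.Ioi (α + s)) ≤ μs n (Set.Ioi (α + s))
        rw [htail, htail]
        exact ENNReal.ofReal_le_ofReal (hPmono _ m n hmn)
      · apply Eventually.of_forall
        intro s
        simp only [htail, htailμ]
        exact ENNReal.tendsto_ofReal (hPtend _)
    have htoReal : Tendsto (fun n => (L n).toReal) atTop (𝓝 Lμ.toReal) :=
      (ENNReal.tendsto_toReal hLμfin).comp hLtend
    simp only [hIn, hIμ]
    exact tendsto_const_nhds.add htoReal
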